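/- Let n ∈ ℕ and let V ⊆ ℝ^n be a nonempty compact set. Then int COP(V) ⊆ ⋃_{r ∈ ℕ} C_r^V: every kernel in the interior of COP(V) (with respect to the supremum norm on the space of kernels on V) belongs to C_r^V for some r ∈ ℕ. -/

import Mathlib

noncomputable section

open Filter Topology

/-- The `r`-stack of a `d`-tensor `T`: `Stk^r(T)(u, w) = T(u)`. -/
def stk {α : Type*} (d r : ℕ) (T : (Fin d → α) → ℝ) : (Fin (d + r) → α) → ℝ :=
  fun v => T fun i => v (Fin.castAdd r i)

/-- The symmetrization of a `d`-tensor: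
`σ(T)(v) = (1/d!) ∑_{π ∈ Sym(d)} T(v ∘ π)`. -/
def tsym {α : Type*} (d : ℕ) (T : (Fin d → α) → ℝ) : (Fin d → α) → ℝ :=
  fun v => (d.factorial : ℝ)⁻¹ * ∑ π : Equiv.Perm (Fin d), T (v ∘ π)

/-- A symmetric two-variable function identified with a `2`-tensor. -/
def kerTensor {X : Type*} (K : X → X → ℝ) : (Fin 2 → X) → ℝ :=
  fun v => K (v 0) (v 1)

/-- A kernel: a continuous symmetric real-valued function of two variables. -/
def IsKernel {X : Type*} [TopologicalSpace X] (K : X → X → ℝ) : Prop :=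
  Continuous (fun p : X × X => K p.1 p.2) ∧ ∀ x y, K x y = K y x

/-- Positive semidefiniteness of a two-variable function. -/
def IsPSDKernel {X : Type*} (K : X → X → ℝ) : Prop :=
  ∀ (k : ℕ) (v : Fin k → X) (x : Fin k → ℝ),
    0 ≤ ∑ i, ∑ j, K (v i) (v j) * x i * x j

/-- Copositivity of a two-variable function. -/
def IsCopositiveKernel {X : Type*} (K : X → X → ℝ) : Prop :=
  ∀ (k : ℕ) (v : Fin k → X) (x : Fin k → ℝ), (∀ i, 0 ≤ x i) →
    0 ≤ ∑ i, ∑ j, K (v i) (v j) * x i * x j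

/-- An `(r+2)`-tensor `S` is 2-PSD if it is continuous and every slice
`(x, y) ↦ S(x, y, z)` is a PSD kernel. -/
def Is2PSD {X : Type*} [TopologicalSpace X] (r : ℕ)
    (S : (Fin (2 + r) → X) → ℝ) : Prop :=
  Continuous S ∧ ∀ z : Fin r → X, IsPSDKernel fun x y => S (Fin.append ![x, y] z)

/-- The tensor condition defining `C_r`: `σ(Stk^r M) = σ(N)` for some
nonnegative `(r+2)`-tensor `N`. -/
def CrCond {X : Type*} (r : ℕ) (M : X → X → ℝ) : Prop :=
  ∃ N : (Fin (2 + r) → X) → ℝ, (∀ v, 0 ≤ N v) ∧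
    tsym (2 + r) (stk 2 r (kerTensor M)) = tsym (2 + r) N

/-- Membership in `C_r`: a kernel satisfying the `C_r` tensor condition. -/
def memCr {X : Type*} [TopologicalSpace X] (r : ℕ) (M : X → X → ℝ) : Prop :=
  IsKernel M ∧ CrCond r M

/-- Membership in `Q_r`: a kernel `M` with `σ(Stk^r M) = σ(N) + σ(S)` for some
nonnegative `(r+2)`-tensor `N` and 2-PSD `(r+2)`-tensor `S`. -/
def memQr {X : Type*} [TopologicalSpace X] (r : ℕ) (M : X → X → ℝ) : Prop :=
  IsKernel M ∧ ∃ N S : (Fin (2 + r) → X) → ℝ, (∀ v, 0 ≤ N v) ∧ Is2PSD r S ∧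
    tsym (2 + r) (stk 2 r (kerTensor M)) =
      fun v => tsym (2 + r) N v + tsym (2 + r) S v

/-- The space of kernels on `V`, i.e. symmetric continuous functions on
`V × V`, with the topology of `C(V × V, ℝ)` (for `V` compact this is the
supremum-norm topology). -/
def KernelSpace {n : ℕ} (V : Set (Fin n → ℝ)) : Type _ :=
  {K : C(↥V × ↥V, ℝ) // ∀ x y, K (x, y) = K (y, x)}

instance {n : ℕ} (V : Set (Fin n → ℝ)) : TopologicalSpace (KernelSpace V) :=
  instTopologicalSpaceSubtype

/-- `COP(V)` as a subset of the space of kernels on `V`. -/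
def COPSet {n : ℕ} (V : Set (Fin n → ℝ)) : Set (KernelSpace V) :=
  {K | IsCopositiveKernel fun x y => K.1 (x, y)}


lemma my_tsym_idem {α : Type*} (d : ℕ) (T : (Fin d → α) → ℝ) :
    tsym d (tsym d T) = tsym d T := by
  funext v
  have h : ∀ π : Equiv.Perm (Fin d),
      ∑ σ : Equiv.Perm (Fin d), T ((v ∘ π) ∘ σ)
        = ∑ σ : Equiv.Perm (Fin d), T (v ∘ σ) := by
    intro π
    exact Equiv.sum_comp (Equiv.mulLeft π) (fun σ => T (v ∘ σ))
  calc tsym d (tsym d T) v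
      = (d.factorial : ℝ)⁻¹ * ∑ π : Equiv.Perm (Fin d),
          ((d.factorial : ℝ)⁻¹ * ∑ σ : Equiv.Perm (Fin d), T (v ∘ σ)) := by
        unfold tsym
        congr 1
        refine Finset.sum_congr rfl fun π _ => ?_
        rw [← h π]
    _ = tsym d T v := by
        rw [Finset.sum_const, Finset.card_univ, Fintype.card_perm, Fintype.card_fin,
          nsmul_eq_mul]
        have hd : (d.factorial : ℝ) ≠ 0 := Nat.cast_ne_zero.mpr d.factorial_ne_zero
        unfold tsym
        field_simp

lemma exists_perm_two {k : ℕ} {a b i j : Fin k} (hab : a ≠ b) (hij : i ≠ j) :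
    ∃ τ : Equiv.Perm (Fin k), τ a = i ∧ τ b = j := by
  refine ⟨Equiv.swap a i * Equiv.swap b (Equiv.swap a i j), ?_, ?_⟩
  · have h1 : a ≠ Equiv.swap a i j := by
      intro h
      have h2 := congrArg (Equiv.swap a i) h
      rw [Equiv.swap_apply_left, Equiv.swap_apply_self] at h2
      exact hij h2
    rw [Equiv.Perm.mul_apply, Equiv.swap_apply_of_ne_of_ne hab h1, Equiv.swap_apply_left]
  · rw [Equiv.Perm.mul_apply, Equiv.swap_apply_left, Equiv.swap_apply_self]

lemma perm_sum_nonneg {k : ℕ} (g : Fin k → Fin k → ℝ) (a b : Fin k) (hab : a ≠ b)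
    (hS : 0 ≤ ∑ p ∈ (Finset.univ : Finset (Fin k)).offDiag, g p.1 p.2) :
    0 ≤ ∑ π : Equiv.Perm (Fin k), g (π a) (π b) := by
  set T := ∑ π : Equiv.Perm (Fin k), g (π a) (π b) with hT
  have hF : ∀ p ∈ (Finset.univ : Finset (Fin k)).offDiag,
      ∑ π : Equiv.Perm (Fin k), g (π p.1) (π p.2) = T := by
    intro p hp
    obtain ⟨τ, hτa, hτb⟩ := exists_perm_two hab (Finset.mem_offDiag.mp hp).2.2
    calc ∑ π : Equiv.Perm (Fin k), g (π p.1) (π p.2)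
        = ∑ π : Equiv.Perm (Fin k), g ((π * τ) a) ((π * τ) b) := by
          simp only [Equiv.Perm.mul_apply, hτa, hτb]
      _ = T := Equiv.sum_comp (Equiv.mulRight τ) (fun π => g (π a) (π b))
  have hinner : ∀ π : Equiv.Perm (Fin k),
      ∑ p ∈ (Finset.univ : Finset (Fin k)).offDiag, g (π p.1) (π p.2)
        = ∑ p ∈ (Finset.univ : Finset (Fin k)).offDiag, g p.1 p.2 := by
    intro π
    refine (Finset.sum_equiv (Equiv.prodCongr π π) ?_ ?_)
    · intro p
      simp [Finset.mem_offDiag]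
    · intro p _
      rfl
  have key : ((Finset.univ : Finset (Fin k)).offDiag.card : ℝ) * T
      = ∑ π : Equiv.Perm (Fin k),
          ∑ p ∈ (Finset.univ : Finset (Fin k)).offDiag, g (π p.1) (π p.2) := by
    rw [Finset.sum_comm]
    rw [Finset.sum_congr rfl hF, Finset.sum_const, nsmul_eq_mul]
  have hkey2 : 0 ≤ ((Finset.univ : Finset (Fin k)).offDiag.card : ℝ) * T := by
    rw [key]
    exact Finset.sum_nonneg fun π _ => (hinner π) ▸ hS
  have hcard : (0:ℝ) < ((Finset.univ : Finset (Fin k)).offDiag.card : ℝ) := by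
    have : (a, b) ∈ (Finset.univ : Finset (Fin k)).offDiag := by
      simp [Finset.mem_offDiag, hab]
    exact_mod_cast Finset.card_pos.mpr ⟨(a,b), this⟩
  nlinarith [hkey2, hcard]

/-- `int COP(V) ⊆ ⋃_r C_r^V`. -/
theorem stmt6 (n : ℕ) (V : Set (Fin n → ℝ)) (hVne : V.Nonempty)
    (hVc : IsCompact V) (K : KernelSpace V)
    (hK : K ∈ interior (COPSet V)) :
    ∃ r : ℕ, memCr r fun x y : ↥V => K.1 (x, y) := by
  classical
  haveI : CompactSpace ↥V := isCompact_iff_compactSpace.mp hVc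
  haveI : Nonempty ↥V := hVne.to_subtype
  set M : ↥V → ↥V → ℝ := fun x y => K.1 (x, y) with hM
  -- extract a metric ball around K.1 inside COP
  have h1 : COPSet V ∈ 𝓝 K := mem_interior_iff_mem_nhds.mp hK
  have h2 : COPSet V ∈ Filter.comap (Subtype.val : KernelSpace V → C(↥V × ↥V, ℝ)) (𝓝 K.1) := by
    have h3 : 𝓝 K = Filter.comap (Subtype.val : KernelSpace V → C(↥V × ↥V, ℝ)) (𝓝 K.1) :=
      nhds_induced _ _
    rw [h3] at h1
    exact h1
  obtain ⟨W, hW, hWsub⟩ := Filter.mem_comap.mp h2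
  obtain ⟨ε, hεpos, hball⟩ := Metric.mem_nhds_iff.mp hW
  set δ : ℝ := ε / 2 with hδ
  have hδpos : 0 < δ := half_pos hεpos
  -- the perturbed kernel K - δ is copositive
  set K' : C(↥V × ↥V, ℝ) := K.1 - ContinuousMap.const _ δ with hK'
  have hK'sym : ∀ x y : ↥V, K' (x, y) = K' (y, x) := by
    intro x y
    simp only [hK', ContinuousMap.sub_apply, ContinuousMap.const_apply, K.2 x y]
  have hK'cop : IsCopositiveKernel fun x y : ↥V => K' (x, y) := by
    have : (⟨K', hK'sym⟩ : KernelSpace V) ∈ COPSet V := by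
      apply hWsub
      apply Set.mem_preimage.mpr
      apply hball
      rw [Metric.mem_ball]
      have hd : dist K' K.1 ≤ δ := by
        rw [ContinuousMap.dist_le hδpos.le]
        intro x
        simp only [hK', ContinuousMap.sub_apply, ContinuousMap.const_apply, Real.dist_eq]
        simp [abs_of_nonneg hδpos.le]
      have : δ < ε := by
        rw [hδ]; linarith
      exact lt_of_le_of_lt hd this
    exact this
  -- the key lower bound for full sums
  have hfull : ∀ (k : ℕ) (v : Fin k → ↥V),
      δ * (k : ℝ) ^ 2 ≤ ∑ i, ∑ j, M (v i) (v j) := by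
    intro k v
    have h0 := hK'cop k v (fun _ => 1) (fun _ => zero_le_one)
    simp only [mul_one] at h0
    have heq : ∑ i, ∑ j, K' (v i, v j) = (∑ i, ∑ j, M (v i) (v j)) - (k : ℝ) * k * δ := by
      simp only [hK', ContinuousMap.sub_apply, ContinuousMap.const_apply, hM,
        Finset.sum_sub_distrib, Finset.sum_const, Finset.card_univ, Fintype.card_fin,
        nsmul_eq_mul]
      ring
    rw [heq] at h0
    nlinarith [h0]
  -- uniform bound on the kernel
  set C : ℝ := ‖K.1‖ with hC
  have hCb : ∀ p : ↥V × ↥V, |K.1 p| ≤ C := fun p => K.1.norm_coe_le_norm p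
  -- choose r
  set r : ℕ := ⌈C / δ⌉₊ with hr
  refine ⟨r, ?_, ?_⟩
  · exact ⟨K.1.continuous, K.2⟩
  -- nonnegativity of off-diagonal sums for tuples of length 2 + r
  have hS : ∀ v : Fin (2 + r) → ↥V,
      0 ≤ ∑ p ∈ (Finset.univ : Finset (Fin (2 + r))).offDiag, M (v p.1) (v p.2) := by
    intro v
    let k : ℕ := 2 + r
    show 0 ≤ ∑ p ∈ (Finset.univ : Finset (Fin k)).offDiag, M (v p.1) (v p.2)
    have hk : k = 2 + r := rfl
    have hsplit : ∑ i, ∑ j, M (v i) (v j)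
        = (∑ i, M (v i) (v i))
          + ∑ p ∈ (Finset.univ : Finset (Fin k)).offDiag, M (v p.1) (v p.2) := by
      rw [← Finset.sum_product']
      rw [← Finset.diag_union_offDiag (Finset.univ : Finset (Fin k)),
        Finset.sum_union (Finset.disjoint_diag_offDiag _), Finset.sum_diag]
    have hdiag : ∑ i, M (v i) (v i) ≤ (k : ℝ) * C := by
      calc ∑ i, M (v i) (v i) ≤ ∑ _i : Fin k, C := by
            refine Finset.sum_le_sum fun i _ => ?_
            exact le_trans (le_abs_self _) (hCb (v i, v i))
        _ = (k : ℝ) * C := by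
            rw [Finset.sum_const, Finset.card_univ, Fintype.card_fin, nsmul_eq_mul]
    have hfk := hfull k v
    have hkC : C ≤ δ * (k : ℝ) := by
      have h3 : C / δ ≤ (r : ℝ) := Nat.le_ceil (C / δ)
      have h4 : (r : ℝ) ≤ (k : ℝ) := by
        rw [hk]; push_cast; linarith
      have := (div_le_iff₀ hδpos).mp (le_trans h3 h4)
      linarith [this]
    have hk2 : δ * (k:ℝ) * (k:ℝ) = δ * (k:ℝ)^2 := by ring
    nlinarith [hfk, hdiag, hkC, hsplit, (show (0:ℝ) < (k:ℝ) by exact_mod_cast (show 0 < k by omega))]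
  -- build N as the symmetrization itself
  refine ⟨tsym (2 + r) (stk 2 r (kerTensor M)), ?_, (my_tsym_idem _ _).symm⟩
  intro v
  unfold tsym
  refine mul_nonneg (by positivity) ?_
  have ha : (Fin.castAdd r (0 : Fin 2)) ≠ (Fin.castAdd r (1 : Fin 2)) := by
    intro h
    have := congrArg Fin.val h
    simp [Fin.castAdd] at this
  have := perm_sum_nonneg (fun i j => M (v i) (v j))
    (Fin.castAdd r (0 : Fin 2)) (Fin.castAdd r (1 : Fin 2)) ha (hS v)
  exact this
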